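/- Let V > 0, let r = √(V/π) (so that V = πr² is the area of the Euclidean disc of radius r), and let A_B = 2πr (its boundary length). Let A ≥ 0 and let μ be a measure on [0, ∞) × [0, π/2)² (coordinates (ℓ, α, β)) such that: (i) ∫ (ℓ²/4)·(1/cos(α) + 1/cos(β)) dμ ≤ A·V and this integral is finite; (ii) ∫ ℓ dμ ≥ 2π·V; (iii) ∫ 4r²/(1/cos(α) + 1/cos(β)) dμ ≤ πr²·A_B and this integral is finite. Then A ≥ A_B. -/

import Mathlib

open Real MeasureTheory ENNReal

/-- The linear-programming core of Weil's planar isoperimetric theorem (`κ = 0`, `n = 2`):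
`V > 0`, `r = √(V/π)`, `A_B = 2πr`; if a nonnegative measure `μ` on chords
`(ℓ, α, β) ∈ [0, ∞) × [0, π/2)²` satisfies
(i) `∫ (ℓ²/4)·(1/cos α + 1/cos β) dμ ≤ A·V`, (ii) `∫ ℓ dμ ≥ 2π·V`, and
(iii) `∫ 4r²/(1/cos α + 1/cos β) dμ ≤ πr²·A_B`, then `A ≥ A_B`. -/
theorem weil_LP_core (V : ℝ) (hV : 0 < V) (r A_B : ℝ)
    (hr : r = Real.sqrt (V / π)) (hAB : A_B = 2 * π * r)
    (A : ℝ) (hA : 0 ≤ A) (μ : Measure (ℝ × ℝ × ℝ))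
    (hsupp : μ ((Set.Ici (0 : ℝ) ×ˢ (Set.Ico 0 (π / 2) ×ˢ Set.Ico 0 (π / 2)))ᶜ) = 0)
    (h1 : ∫⁻ x, ENNReal.ofReal ((x.1 ^ 2 / 4) * (1 / cos x.2.1 + 1 / cos x.2.2)) ∂μ
            ≤ ENNReal.ofReal (A * V))
    (h2 : ENNReal.ofReal (2 * π * V) ≤ ∫⁻ x, ENNReal.ofReal x.1 ∂μ)
    (h3 : ∫⁻ x, ENNReal.ofReal (4 * r ^ 2 / (1 / cos x.2.1 + 1 / cos x.2.2)) ∂μ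
            ≤ ENNReal.ofReal (π * r ^ 2 * A_B)) :
    A_B ≤ A := by
  have hπ : (0:ℝ) < π := Real.pi_pos
  have hVπ : 0 < V / π := div_pos hV hπ
  have hr0 : 0 < r := hr ▸ Real.sqrt_pos.mpr hVπ
  have hr2 : π * r ^ 2 = V := by
    rw [hr, Real.sq_sqrt hVπ.le]
    field_simp
  -- a.e. membership in the support set
  have hae : ∀ᵐ x ∂μ,
      x ∈ (Set.Ici (0 : ℝ) ×ˢ (Set.Ico 0 (π / 2) ×ˢ Set.Ico 0 (π / 2))) := by
    rw [ae_iff]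
    convert hsupp using 2
    rfl
  -- pointwise AM-GM bound on the support
  have hpt : ∀ᵐ x ∂μ, ENNReal.ofReal (2 * r * x.1) ≤
      ENNReal.ofReal ((x.1 ^ 2 / 4) * (1 / cos x.2.1 + 1 / cos x.2.2)) +
      ENNReal.ofReal (4 * r ^ 2 / (1 / cos x.2.1 + 1 / cos x.2.2)) := by
    filter_upwards [hae] with x hx
    obtain ⟨hl, hα, hβ⟩ := hx
    have hcα : 0 < cos x.2.1 := Real.cos_pos_of_mem_Ioo
      ⟨lt_of_lt_of_le (by linarith [Real.pi_pos]) hα.1, hα.2⟩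
    have hcβ : 0 < cos x.2.2 := Real.cos_pos_of_mem_Ioo
      ⟨lt_of_lt_of_le (by linarith [Real.pi_pos]) hβ.1, hβ.2⟩
    set c : ℝ := 1 / cos x.2.1 + 1 / cos x.2.2 with hc
    have hcpos : 0 < c := by positivity
    have hl0 : 0 ≤ x.1 := hl
    have key : 2 * r * x.1 ≤ x.1 ^ 2 / 4 * c + 4 * r ^ 2 / c := by
      rw [← sub_nonneg]
      have : x.1 ^ 2 / 4 * c + 4 * r ^ 2 / c - 2 * r * x.1
          = (x.1 * c - 4 * r) ^ 2 / (4 * c) := by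
        field_simp
        ring
      rw [this]
      positivity
    calc ENNReal.ofReal (2 * r * x.1)
        ≤ ENNReal.ofReal (x.1 ^ 2 / 4 * c + 4 * r ^ 2 / c) :=
          ENNReal.ofReal_le_ofReal key
      _ ≤ _ := by
          rw [ENNReal.ofReal_add (by positivity) (by positivity)]
  -- integrate
  have hmeas1 : Measurable fun x : ℝ × ℝ × ℝ =>
      ENNReal.ofReal ((x.1 ^ 2 / 4) * (1 / cos x.2.1 + 1 / cos x.2.2)) := by
    fun_prop
  have hint : ENNReal.ofReal (2 * r) * ∫⁻ x, ENNReal.ofReal x.1 ∂μ ≤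
      ENNReal.ofReal (A * V) + ENNReal.ofReal (π * r ^ 2 * A_B) := by
    calc ENNReal.ofReal (2 * r) * ∫⁻ x, ENNReal.ofReal x.1 ∂μ
        = ∫⁻ x, ENNReal.ofReal (2 * r) * ENNReal.ofReal x.1 ∂μ :=
          (lintegral_const_mul' _ _ ENNReal.ofReal_ne_top).symm
      _ = ∫⁻ x, ENNReal.ofReal (2 * r * x.1) ∂μ := by
          simp_rw [← ENNReal.ofReal_mul (by positivity : (0:ℝ) ≤ 2 * r)]
      _ ≤ ∫⁻ x, (ENNReal.ofReal ((x.1 ^ 2 / 4) * (1 / cos x.2.1 + 1 / cos x.2.2)) +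
            ENNReal.ofReal (4 * r ^ 2 / (1 / cos x.2.1 + 1 / cos x.2.2))) ∂μ :=
          lintegral_mono_ae hpt
      _ = (∫⁻ x, ENNReal.ofReal ((x.1 ^ 2 / 4) * (1 / cos x.2.1 + 1 / cos x.2.2)) ∂μ) +
          ∫⁻ x, ENNReal.ofReal (4 * r ^ 2 / (1 / cos x.2.1 + 1 / cos x.2.2)) ∂μ :=
          lintegral_add_left hmeas1 _
      _ ≤ _ := add_le_add h1 h3
  have hfinal : ENNReal.ofReal (2 * r * (2 * π * V)) ≤
      ENNReal.ofReal (A * V + π * r ^ 2 * A_B) := by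
    rw [ENNReal.ofReal_mul (by positivity : (0:ℝ) ≤ 2 * r),
      ENNReal.ofReal_add (by positivity) (by rw [hr2, hAB]; positivity)]
    exact le_trans (mul_le_mul_right h2 _) hint
  have hreal : 2 * r * (2 * π * V) ≤ A * V + π * r ^ 2 * A_B := by
    have hb : 0 ≤ A * V + π * r ^ 2 * A_B := by
      rw [hr2, hAB]; positivity
    exact (ENNReal.ofReal_le_ofReal_iff hb).mp hfinal
  rw [hr2, hAB] at hreal
  nlinarith [hreal, hV, hr0, hπ]
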